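/- arXiv:1905.05924 — 3 statements merged into one kernel-verified Lean document; each statement's English description precedes it below -/
import Mathlib

section
/- The set X_{α,θ} = { Σ_{n=1}^∞ δₙ αⁿ : (δₙ) ∈ W_θ } is a closed subset of ℂ. -/
open Complex

/-- e^{iθ} -/
noncomputable def rot (θ : ℝ) : ℂ := Complex.exp (θ * Complex.I)

/-- The digit set Δ_θ = {0, 1, e^{iθ}, …, e^{(p-1)iθ}}. -/
def Delta (θ : ℝ) (p : ℕ) : Set ℂ := insert 0 {z | ∃ k, k < p ∧ z = rot θ ^ k}

/-- Generalized Revolving Condition: each nonzero digit is e^{iθ} times the previous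
nonzero digit. Sequences are indexed from 1; index 0 is a dummy (digit 0). -/
def GRC (θ : ℝ) (δ : ℕ → ℂ) : Prop :=
  ∀ j k : ℕ, j < k → δ j ≠ 0 → δ k ≠ 0 → (∀ m, j < m → m < k → δ m = 0) →
    δ k = rot θ * δ j

/-- Membership in W_θ (with the convention δ 0 = 0, i.e. sequences start at index 1). -/
def Wrev (θ : ℝ) (p : ℕ) (δ : ℕ → ℂ) : Prop :=
  δ 0 = 0 ∧ (∀ n, δ n ∈ Delta θ p) ∧ GRC θ δ

/-- The first nonzero digit of δ is c (or δ is identically zero). -/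
def FirstNonzero (δ : ℕ → ℂ) (c : ℂ) : Prop :=
  (∀ n, δ n = 0) ∨ ∃ j, δ j = c ∧ ∀ m, m < j → δ m = 0

/-- X_c : points from revolving sequences whose first nonzero digit is c. -/
noncomputable def Xc (α : ℂ) (θ : ℝ) (p : ℕ) (c : ℂ) : Set ℂ :=
  {x | ∃ δ : ℕ → ℂ, Wrev θ p δ ∧ FirstNonzero δ c ∧ x = ∑' n, δ n * α ^ n}

/-- X_{α,θ} : points from all revolving sequences. -/
noncomputable def Xfull (α : ℂ) (θ : ℝ) (p : ℕ) : Set ℂ :=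
  {x | ∃ δ : ℕ → ℂ, Wrev θ p δ ∧ x = ∑' n, δ n * α ^ n}

lemma Delta_finite (θ : ℝ) (p : ℕ) : (Delta θ p).Finite := by
  have : Delta θ p = insert 0 ((fun k => rot θ ^ k) '' Set.Iio p) := by
    ext z
    simp [Delta, Set.mem_image, eq_comm]
  rw [this]
  exact ((Set.finite_Iio p).image _).insert 0

lemma Delta_norm_le (θ : ℝ) (p : ℕ) {z : ℂ} (hz : z ∈ Delta θ p) : ‖z‖ ≤ 1 := by
  rcases hz with h | ⟨k, _, rfl⟩
  · simp [h]
  · have : ‖rot θ‖ = 1 := by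
      simp [rot, Complex.norm_exp]
    rw [norm_pow, this, one_pow]

/-- X_{α,θ} is a closed subset of ℂ. -/
theorem Xfull_isClosed (α : ℂ) (θ : ℝ) (p : ℕ) (q : ℤ) (hp : 0 < p)
    (hθ : θ = 2 * Real.pi * (q : ℝ) / (p : ℝ)) (hα : ‖α‖ < 1) :
    IsClosed (Xfull α θ p) := by
  have hfin : (Delta θ p).Finite := Delta_finite θ p
  haveI : Finite (Delta θ p) := hfin.to_subtype
  haveI : CompactSpace (Delta θ p) := Finite.compactSpace
  set T := (ℕ → (Delta θ p))
  set Φ : T → ℂ := fun δ => ∑' n, (δ n : ℂ) * α ^ n with hΦdef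
  have hΦ : Continuous Φ := by
    apply continuous_tsum (u := fun n => ‖α‖ ^ n)
    · intro n
      exact (continuous_subtype_val.comp (continuous_apply n)).mul continuous_const
    · exact summable_geometric_of_lt_one (norm_nonneg α) hα
    · intro n δ
      rw [norm_mul, norm_pow]
      calc ‖(δ n : ℂ)‖ * ‖α‖ ^ n ≤ 1 * ‖α‖ ^ n := by
            apply mul_le_mul_of_nonneg_right (Delta_norm_le θ p (δ n).2)
            positivity
        _ = ‖α‖ ^ n := one_mul _
  set S : Set T := {δ | ((δ 0 : ℂ) = 0) ∧ GRC θ (fun n => (δ n : ℂ))} with hSdef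
  have hXS : Xfull α θ p = Φ '' S := by
    ext x
    constructor
    · rintro ⟨δ, ⟨h0, hmem, hgrc⟩, rfl⟩
      refine ⟨fun n => ⟨δ n, hmem n⟩, ⟨h0, hgrc⟩, rfl⟩
    · rintro ⟨δ, ⟨h0, hgrc⟩, rfl⟩
      exact ⟨fun n => (δ n : ℂ), ⟨h0, fun n => (δ n).2, hgrc⟩, rfl⟩
  have hSclosed : IsClosed S := by
    have : S = {δ : T | (δ 0 : ℂ) = 0} ∩
        ⋂ j, ⋂ k, {δ : T | j < k → (δ j : ℂ) ≠ 0 → (δ k : ℂ) ≠ 0 →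
          (∀ m, j < m → m < k → (δ m : ℂ) = 0) → (δ k : ℂ) = rot θ * δ j} := by
      ext δ
      simp only [hSdef, Set.mem_setOf_eq, Set.mem_inter_iff, Set.mem_iInter]
      exact Iff.rfl
    rw [this]
    apply IsClosed.inter
    · exact isClosed_eq (continuous_subtype_val.comp (continuous_apply 0)) continuous_const
    · apply isClosed_iInter; intro j
      apply isClosed_iInter; intro k
      by_cases hjk : j < k
      · -- depends on finitely many coordinates
        set π : T → (Fin (k + 1) → (Delta θ p)) := fun δ i => δ i with hπdef
        have hπ : Continuous π := continuous_pi fun i => continuous_apply _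
        haveI : DiscreteTopology (Fin (k + 1) → (Delta θ p)) :=
          Finite.instDiscreteTopology
        have : {δ : T | j < k → (δ j : ℂ) ≠ 0 → (δ k : ℂ) ≠ 0 →
            (∀ m, j < m → m < k → (δ m : ℂ) = 0) → (δ k : ℂ) = rot θ * δ j} =
            π ⁻¹' {v : Fin (k + 1) → (Delta θ p) |
              j < k → (v ⟨j, Nat.lt_succ_of_lt hjk⟩ : ℂ) ≠ 0 →
              (v ⟨k, Nat.lt_succ_self k⟩ : ℂ) ≠ 0 →
              (∀ m : ℕ, (hm : j < m) → (hm' : m < k) →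
                (v ⟨m, Nat.lt_succ_of_lt hm'⟩ : ℂ) = 0) →
              (v ⟨k, Nat.lt_succ_self k⟩ : ℂ) = rot θ * v ⟨j, Nat.lt_succ_of_lt hjk⟩} := by
          ext δ
          simp only [Set.mem_setOf_eq, Set.mem_preimage, hπdef]
        rw [this]
        exact (isClosed_discrete _).preimage hπ
      · have : {δ : T | j < k → (δ j : ℂ) ≠ 0 → (δ k : ℂ) ≠ 0 →
            (∀ m, j < m → m < k → (δ m : ℂ) = 0) → (δ k : ℂ) = rot θ * δ j} =
            Set.univ := by
          ext δ; simp only [Set.mem_setOf_eq, Set.mem_univ, iff_true]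
          intro h; exact absurd h hjk
        rw [this]; exact isClosed_univ
  have hScompact : IsCompact S := hSclosed.isCompact
  rw [hXS]
  exact (hScompact.image hΦ).isClosed
end

section
/- The set X₁ = { Σ_{n=1}^∞ δₙ αⁿ : (δₙ) ∈ W_θ, first nonzero digit of (δₙ) equals 1 } satisfies the set equation X₁ = ψ₁(X₁) ∪ ψ₂(X₁), where ψ₁(z) = αz and ψ₂(z) = α e^{iθ} z + α. -/
open Complex

lemma rot_ne_zero' (θ : ℝ) : rot θ ≠ 0 := Complex.exp_ne_zero _

lemma norm_rot (θ : ℝ) : ‖rot θ‖ = 1 := by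
  simp [rot, Complex.norm_exp_ofReal_mul_I]

lemma rot_pow_eq_one (θ : ℝ) (p : ℕ) (q : ℤ) (hp : 0 < p)
    (hθ : θ = 2 * Real.pi * (q : ℝ) / (p : ℝ)) : rot θ ^ p = 1 := by
  rw [rot, ← Complex.exp_nat_mul]
  have hp' : (p : ℂ) ≠ 0 := Nat.cast_ne_zero.2 hp.ne'
  have : (p : ℂ) * ((θ : ℂ) * Complex.I) = (q : ℂ) * (2 * (Real.pi : ℂ) * Complex.I) := by
    rw [hθ]; push_cast; field_simp
  rw [this, Complex.exp_int_mul_two_pi_mul_I]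

lemma mem_delta_rot_pow_mul {θ : ℝ} {p : ℕ} (hp : 0 < p) (h1 : rot θ ^ p = 1) (j : ℕ)
    {z : ℂ} (hz : z ∈ Delta θ p) : rot θ ^ j * z ∈ Delta θ p := by
  rcases hz with rfl | ⟨k, hk, rfl⟩
  · exact Or.inl (mul_zero _)
  · exact Or.inr ⟨(j + k) % p, Nat.mod_lt _ hp, by rw [← pow_add, pow_eq_pow_mod _ h1]⟩

lemma delta_norm_le {θ : ℝ} {p : ℕ} {z : ℂ} (hz : z ∈ Delta θ p) : ‖z‖ ≤ 1 := by
  rcases hz with rfl | ⟨k, _, rfl⟩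
  · simp
  · rw [norm_pow, norm_rot, one_pow]

lemma summable_digit (α : ℂ) (hα : ‖α‖ < 1) (δ : ℕ → ℂ) (hδ : ∀ n, ‖δ n‖ ≤ 1) (k : ℕ) :
    Summable (fun n => δ (n + k) * α ^ (n + k)) := by
  apply Summable.of_norm_bounded (summable_geometric_of_lt_one (norm_nonneg α) hα)
  intro n
  rw [norm_mul, norm_pow]
  calc ‖δ (n + k)‖ * ‖α‖ ^ (n + k) ≤ 1 * ‖α‖ ^ (n + k) := by gcongr; exact hδ _
    _ ≤ ‖α‖ ^ n := by
        rw [one_mul, pow_add]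
        exact mul_le_of_le_one_right (by positivity) (pow_le_one₀ (norm_nonneg α) hα.le)

/-- X₁ = ψ₁(X₁) ∪ ψ₂(X₁) with ψ₁(z) = αz, ψ₂(z) = α e^{iθ} z + α. -/
theorem X1_set_equation (α : ℂ) (θ : ℝ) (p : ℕ) (q : ℤ) (hp : 0 < p)
    (hθ : θ = 2 * Real.pi * (q : ℝ) / (p : ℝ)) (hα0 : 0 < ‖α‖) (hα : ‖α‖ < 1) :
    Xc α θ p 1 =
      (fun z => α * z) '' Xc α θ p 1 ∪
      (fun z => α * rot θ * z + α) '' Xc α θ p 1 := by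
  classical
  have h1 : rot θ ^ p = 1 := rot_pow_eq_one θ p q hp hθ
  have hc : rot θ ^ (p - 1) * rot θ = 1 := by
    rw [← pow_succ]
    have hpp : p - 1 + 1 = p := by omega
    rw [hpp, h1]
  have hcne : rot θ ^ (p - 1) ≠ 0 := pow_ne_zero _ (rot_ne_zero' θ)
  ext x
  constructor
  · rintro ⟨δ, ⟨h0, hmem, hgrc⟩, hfirst, rfl⟩
    have hnorm : ∀ n, ‖δ n‖ ≤ 1 := fun n => delta_norm_le (hmem n)
    have hS0 : Summable (fun n => δ n * α ^ n) := by
      simpa using summable_digit α hα δ hnorm 0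
    have hS1 : Summable (fun n => δ (n + 1) * α ^ (n + 1)) := summable_digit α hα δ hnorm 1
    by_cases hδ1 : δ 1 = 0
    · -- first digit of the shifted sequence is 0: use ψ₁
      left
      refine ⟨∑' n, δ (n + 1) * α ^ n, ⟨fun n => δ (n + 1), ⟨hδ1, fun n => hmem _, ?_⟩,
        ?_, rfl⟩, ?_⟩
      · -- GRC
        intro j k hjk hj hk hgap
        refine hgrc (j + 1) (k + 1) (by omega) hj hk ?_
        intro m hm1 hm2
        have h := hgap (m - 1) (by omega) (by omega)
        have hm : m - 1 + 1 = m := by omega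
        rw [← hm]
        exact h
      · -- FirstNonzero
        rcases hfirst with hz | ⟨j, hj1, hjz⟩
        · exact Or.inl fun n => hz _
        · have hj0 : j ≠ 0 := by
            rintro rfl; rw [h0] at hj1; exact one_ne_zero hj1.symm
          refine Or.inr ⟨j - 1, ?_, ?_⟩
          · show δ (j - 1 + 1) = 1
            have : j - 1 + 1 = j := by omega
            rw [this]; exact hj1
          · intro m hm
            exact hjz (m + 1) (by omega)
      · -- sum identity
        show α * (∑' n, δ (n + 1) * α ^ n) = ∑' n, δ n * α ^ n
        rw [← tsum_mul_left, Summable.tsum_eq_zero_add hS0, h0, zero_mul, zero_add]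
        exact tsum_congr fun n => by ring
    · -- first nonzero digit is δ 1 = 1: use ψ₂
      right
      rcases hfirst with hz | ⟨j, hj1, hjz⟩
      · exact absurd (hz 1) hδ1
      have hjeq : j = 1 := by
        have hj0 : j ≠ 0 := by
          rintro rfl; rw [h0] at hj1; exact one_ne_zero hj1.symm
        have : ¬ 1 < j := fun h => hδ1 (hjz 1 h)
        omega
      subst hjeq
      set c : ℂ := rot θ ^ (p - 1) with hcdef
      set δ' : ℕ → ℂ := fun n => if n = 0 then 0 else c * δ (n + 1) with hδ'def
      have hδ'0 : δ' 0 = 0 := by simp [hδ'def]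
      have hδ'ne : ∀ n, n ≠ 0 → δ' n = c * δ (n + 1) := by
        intro n hn; simp [hδ'def, hn]
      have hmem' : ∀ n, δ' n ∈ Delta θ p := by
        intro n
        rcases Nat.eq_zero_or_pos n with rfl | hn
        · rw [hδ'0]; exact Or.inl rfl
        · rw [hδ'ne n (by omega)]
          exact mem_delta_rot_pow_mul hp h1 _ (hmem _)
      have hnorm' : ∀ n, ‖δ' n‖ ≤ 1 := fun n => delta_norm_le (hmem' n)
      have hS' : Summable (fun n => δ' n * α ^ n) := by
        simpa using summable_digit α hα δ' hnorm' 0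
      refine ⟨∑' n, δ' n * α ^ n, ⟨δ', ⟨hδ'0, hmem', ?_⟩, ?_, rfl⟩, ?_⟩
      · -- GRC for δ'
        intro j k hjk hj hk hgap
        have hj0 : j ≠ 0 := by rintro rfl; exact hj hδ'0
        have hk0 : k ≠ 0 := by omega
        rw [hδ'ne j hj0] at hj ⊢
        rw [hδ'ne k hk0] at hk ⊢
        have hjne : δ (j + 1) ≠ 0 := fun h => hj (by rw [h, mul_zero])
        have hkne : δ (k + 1) ≠ 0 := fun h => hk (by rw [h, mul_zero])
        have hkey : δ (k + 1) = rot θ * δ (j + 1) := by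
          refine hgrc (j + 1) (k + 1) (by omega) hjne hkne ?_
          intro m hm1 hm2
          have h := hgap (m - 1) (by omega) (by omega)
          rw [hδ'ne (m - 1) (by omega)] at h
          have hmm : m - 1 + 1 = m := by omega
          rw [hmm] at h
          rcases mul_eq_zero.1 h with h' | h'
          · exact absurd h' hcne
          · exact h'
        rw [hkey]; ring
      · -- FirstNonzero δ' 1
        by_cases hz : ∀ n, δ (n + 2) = 0
        · refine Or.inl fun n => ?_
          cases n with
          | zero => exact hδ'0
          | succ m => rw [hδ'ne (m + 1) m.succ_ne_zero, hz m, mul_zero]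
        · push_neg at hz
          set k0 := Nat.find hz with hk0def
          have hk0 : δ (k0 + 2) ≠ 0 := Nat.find_spec hz
          have hk0min : ∀ m, m < k0 → δ (m + 2) = 0 := fun m hm =>
            of_not_not (Nat.find_min hz hm)
          have hrot : δ (k0 + 2) = rot θ := by
            have := hgrc 1 (k0 + 2) (by omega) (by rw [hj1]; exact one_ne_zero) hk0 ?_
            · rw [this, hj1, mul_one]
            · intro m hm1 hm2
              have h := hk0min (m - 2) (by omega)
              have hmm : m - 2 + 2 = m := by omega
              rwa [hmm] at h
          refine Or.inr ⟨k0 + 1, ?_, ?_⟩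
          · rw [hδ'ne (k0 + 1) k0.succ_ne_zero, hrot, hc]
          · intro m hm
            cases m with
            | zero => exact hδ'0
            | succ m' =>
                rw [hδ'ne (m' + 1) m'.succ_ne_zero, hk0min m' (by omega), mul_zero]
      · -- sum identity : α * rot θ * y + α = x
        show α * rot θ * (∑' n, δ' n * α ^ n) + α = ∑' n, δ n * α ^ n
        have hR : (∑' n, δ n * α ^ n) = α + ∑' n, δ (n + 2) * α ^ (n + 2) := by
          rw [Summable.tsum_eq_zero_add hS0, h0, zero_mul, zero_add, Summable.tsum_eq_zero_add hS1, hj1]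
          norm_num
        have hL : (∑' n, δ' n * α ^ n) = ∑' n, δ' (n + 1) * α ^ (n + 1) := by
          rw [Summable.tsum_eq_zero_add hS', hδ'0, zero_mul, zero_add]
        rw [hR, hL, ← tsum_mul_left, add_comm]
        congr 1
        refine tsum_congr fun n => ?_
        rw [hδ'ne (n + 1) n.succ_ne_zero]
        linear_combination (δ (n + 2) * α ^ (n + 2)) * hc
  · rintro (⟨y, ⟨δ, ⟨h0, hmem, hgrc⟩, hfirst, rfl⟩, rfl⟩ |
            ⟨y, ⟨δ, ⟨h0, hmem, hgrc⟩, hfirst, rfl⟩, rfl⟩)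
    · -- image under ψ₁
      have hnorm : ∀ n, ‖δ n‖ ≤ 1 := fun n => delta_norm_le (hmem n)
      have hS0 : Summable (fun n => δ n * α ^ n) := by
        simpa using summable_digit α hα δ hnorm 0
      set ε : ℕ → ℂ := fun n => if n = 0 then 0 else δ (n - 1) with hεdef
      have hε0 : ε 0 = 0 := by simp [hεdef]
      have hεne : ∀ n, n ≠ 0 → ε n = δ (n - 1) := by intro n hn; simp [hεdef, hn]
      have hmemε : ∀ n, ε n ∈ Delta θ p := by
        intro n
        rcases Nat.eq_zero_or_pos n with rfl | hn
        · rw [hε0]; exact Or.inl rfl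
        · rw [hεne n (by omega)]; exact hmem _
      have hnormε : ∀ n, ‖ε n‖ ≤ 1 := fun n => delta_norm_le (hmemε n)
      have hSε : Summable (fun n => ε n * α ^ n) := by
        simpa using summable_digit α hα ε hnormε 0
      refine ⟨ε, ⟨hε0, hmemε, ?_⟩, ?_, ?_⟩
      · -- GRC
        intro j k hjk hj hk hgap
        have hj0 : j ≠ 0 := by rintro rfl; exact hj hε0
        have hk0 : k ≠ 0 := by omega
        rw [hεne j hj0] at hj ⊢
        rw [hεne k hk0] at hk ⊢
        refine hgrc (j - 1) (k - 1) (by omega) hj hk ?_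
        intro m hm1 hm2
        have h := hgap (m + 1) (by omega) (by omega)
        rwa [hεne (m + 1) m.succ_ne_zero] at h
      · -- FirstNonzero
        rcases hfirst with hz | ⟨j, hj1, hjz⟩
        · refine Or.inl fun n => ?_
          rcases Nat.eq_zero_or_pos n with rfl | hn
          · exact hε0
          · rw [hεne n (by omega)]; exact hz _
        · refine Or.inr ⟨j + 1, ?_, ?_⟩
          · rw [hεne (j + 1) j.succ_ne_zero]; exact hj1
          · intro m hm
            rcases Nat.eq_zero_or_pos m with rfl | hmp
            · exact hε0
            · rw [hεne m (by omega)]; exact hjz _ (by omega)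
      · -- sum identity : α * y = ∑' ε n α^n
        show α * (∑' n, δ n * α ^ n) = ∑' n, ε n * α ^ n
        rw [Summable.tsum_eq_zero_add hSε, hε0, zero_mul, zero_add, ← tsum_mul_left]
        refine tsum_congr fun n => ?_
        rw [hεne (n + 1) n.succ_ne_zero]
        show α * (δ n * α ^ n) = δ n * α ^ (n + 1)
        ring
    · -- image under ψ₂
      have hnorm : ∀ n, ‖δ n‖ ≤ 1 := fun n => delta_norm_le (hmem n)
      have hS0 : Summable (fun n => δ n * α ^ n) := by
        simpa using summable_digit α hα δ hnorm 0
      set ε : ℕ → ℂ := fun n => if n = 0 then 0 else if n = 1 then 1 else rot θ * δ (n - 1)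
        with hεdef
      have hε0 : ε 0 = 0 := by simp [hεdef]
      have hε1 : ε 1 = 1 := by simp [hεdef]
      have hεge : ∀ n, 2 ≤ n → ε n = rot θ * δ (n - 1) := by
        intro n hn
        show (if n = 0 then 0 else if n = 1 then 1 else rot θ * δ (n - 1)) = rot θ * δ (n - 1)
        rw [if_neg (by omega : ¬ n = 0), if_neg (by omega : ¬ n = 1)]
      have hmemε : ∀ n, ε n ∈ Delta θ p := by
        intro n
        match n, (by omega : n = 0 ∨ n = 1 ∨ 2 ≤ n) with
        | _, Or.inl rfl => rw [hε0]; exact Or.inl rfl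
        | _, Or.inr (Or.inl rfl) =>
            rw [hε1]; exact Or.inr ⟨0, hp, (pow_zero _).symm⟩
        | n, Or.inr (Or.inr hn) =>
            rw [hεge n hn]
            have := mem_delta_rot_pow_mul hp h1 1 (hmem (n - 1))
            rwa [pow_one] at this
      have hnormε : ∀ n, ‖ε n‖ ≤ 1 := fun n => delta_norm_le (hmemε n)
      have hSε : Summable (fun n => ε n * α ^ n) := by
        simpa using summable_digit α hα ε hnormε 0
      have hSε1 : Summable (fun n => ε (n + 1) * α ^ (n + 1)) := summable_digit α hα ε hnormε 1
      refine ⟨ε, ⟨hε0, hmemε, ?_⟩, ?_, ?_⟩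
      · -- GRC
        intro j k hjk hj hk hgap
        have hj0 : j ≠ 0 := by rintro rfl; exact hj hε0
        have hk2 : 2 ≤ k := by omega
        rw [hεge k hk2] at hk ⊢
        have hkne : δ (k - 1) ≠ 0 := fun h => hk (by rw [h, mul_zero])
        rcases (by omega : j = 1 ∨ 2 ≤ j) with rfl | hj2
        · -- j = 1 : the first nonzero digit of δ is at position k-1 and equals 1
          have hzero : ∀ m, m < k - 1 → δ m = 0 := by
            intro m hm
            rcases Nat.eq_zero_or_pos m with rfl | hmp
            · exact h0
            · have h := hgap (m + 1) (by omega) (by omega)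
              rw [hεge (m + 1) (by omega)] at h
              have hmm : m + 1 - 1 = m := by omega
              rw [hmm] at h
              rcases mul_eq_zero.1 h with h' | h'
              · exact absurd h' (rot_ne_zero' θ)
              · exact h'
          have hδk1 : δ (k - 1) = 1 := by
            rcases hfirst with hz | ⟨j', hj'1, hj'z⟩
            · exact absurd (hz (k - 1)) hkne
            · have hj'eq : j' = k - 1 := by
                by_contra hne
                rcases Nat.lt_or_ge j' (k - 1) with h' | h'
                · rw [hzero j' h'] at hj'1; exact one_ne_zero hj'1.symm
                · exact hkne (hj'z (k - 1) (by omega))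
              rw [← hj'eq]; exact hj'1
          rw [hδk1, hε1, mul_one]
        · rw [hεge j hj2] at hj ⊢
          have hjne : δ (j - 1) ≠ 0 := fun h => hj (by rw [h, mul_zero])
          have hkey : δ (k - 1) = rot θ * δ (j - 1) := by
            refine hgrc (j - 1) (k - 1) (by omega) hjne hkne ?_
            intro m hm1 hm2
            have h := hgap (m + 1) (by omega) (by omega)
            rw [hεge (m + 1) (by omega)] at h
            have hmm : m + 1 - 1 = m := by omega
            rw [hmm] at h
            rcases mul_eq_zero.1 h with h' | h'
            · exact absurd h' (rot_ne_zero' θ)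
            · exact h'
          rw [hkey]
      · -- FirstNonzero
        refine Or.inr ⟨1, hε1, ?_⟩
        intro m hm
        have : m = 0 := by omega
        rw [this]; exact hε0
      · -- sum identity : α * rot θ * y + α = ∑' ε n α^n
        show α * rot θ * (∑' n, δ n * α ^ n) + α = ∑' n, ε n * α ^ n
        have hR : (∑' n, ε n * α ^ n) = α + ∑' n, ε (n + 2) * α ^ (n + 2) := by
          rw [Summable.tsum_eq_zero_add hSε, hε0, zero_mul, zero_add, Summable.tsum_eq_zero_add hSε1, hε1]
          norm_num
        have hL : (∑' n, δ n * α ^ n) = ∑' n, δ (n + 1) * α ^ (n + 1) := by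
          rw [Summable.tsum_eq_zero_add hS0, h0, zero_mul, zero_add]
        rw [hR, hL, ← tsum_mul_left, add_comm]
        congr 1
        refine tsum_congr fun n => ?_
        rw [hεge (n + 2) (by omega)]
        show α * rot θ * (δ (n + 1) * α ^ (n + 1)) = rot θ * δ (n + 2 - 1) * α ^ (n + 2)
        have : n + 2 - 1 = n + 1 := by omega
        rw [this]; ring
end

section
/- X³₁, the set of points Σ δₙ ∏_{j≤n} ξⱼ over alternating sequences with first nonzero digit 1 (with ξⱼ depending on (δₙ) by conjugating after each nonzero digit), is a closed subset of ℂ. -/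
open Complex

open scoped Classical in
/-- N_j : the number of nonzero digits among positions 1,…,j. -/
noncomputable def Ncount (δ : ℕ → ℂ) (j : ℕ) : ℕ :=
  ((Finset.Icc 1 j).filter (fun m => δ m ≠ 0)).card

/-- Alternating Condition: each nonzero digit equals e^{+iθ} times the previous nonzero
digit δ_{j₀} if the count N_{j₀} of nonzero digits up to j₀ is odd, and e^{-iθ} times it
if N_{j₀} is even. Sequences are indexed from 1; index 0 is a dummy (digit 0). -/
def AC (θ : ℝ) (δ : ℕ → ℂ) : Prop :=
  ∀ j k : ℕ, j < k → δ j ≠ 0 → δ k ≠ 0 → (∀ m, j < m → m < k → δ m = 0) →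
    δ k = (if Odd (Ncount δ j) then rot θ else (rot θ)⁻¹) * δ j

/-- Membership in W^A_θ (with the convention δ 0 = 0, i.e. sequences start at index 1). -/
def Walt (θ : ℝ) (p : ℕ) (δ : ℕ → ℂ) : Prop :=
  δ 0 = 0 ∧ (∀ n, δ n ∈ Delta θ p) ∧ AC θ δ

/-- The weights ξ: ξ₁ = α and ξ_{j+1} = ξ_j if δ_j = 0, conj ξ_j otherwise. -/
noncomputable def xi (α : ℂ) (δ : ℕ → ℂ) : ℕ → ℂ
  | 0 => α
  | j + 1 => if δ j = 0 then xi α δ j else starRingEnd ℂ (xi α δ j)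

/-- X³₁ : points from alternating sequences with first nonzero digit 1. -/
noncomputable def X3one (α : ℂ) (θ : ℝ) (p : ℕ) : Set ℂ :=
  {x | ∃ δ : ℕ → ℂ, Walt θ p δ ∧ FirstNonzero δ 1 ∧
    x = ∑' n, δ n * ∏ j ∈ Finset.Icc 1 n, xi α δ j}

/-- X³_{α,θ} : points from all alternating sequences. -/
noncomputable def X3full (α : ℂ) (θ : ℝ) (p : ℕ) : Set ℂ :=
  {x | ∃ δ : ℕ → ℂ, Walt θ p δ ∧
    x = ∑' n, δ n * ∏ j ∈ Finset.Icc 1 n, xi α δ j}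

noncomputable def dig (θ : ℝ) (p : ℕ) (i : Fin (p+1)) : ℂ :=
  if i.val = 0 then 0 else rot θ ^ (i.val - 1)

lemma dig_mem (θ : ℝ) (p : ℕ) (i : Fin (p+1)) : dig θ p i ∈ Delta θ p := by
  unfold dig Delta
  split
  · exact Set.mem_insert _ _
  · exact Set.mem_insert_iff.mpr (Or.inr ⟨i.val - 1, by omega, rfl⟩)

lemma dig_surj (θ : ℝ) (p : ℕ) {z : ℂ} (hz : z ∈ Delta θ p) :
    ∃ i : Fin (p+1), dig θ p i = z := by
  rcases Set.mem_insert_iff.mp hz with rfl | ⟨k, hk, rfl⟩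
  · exact ⟨0, by simp [dig]⟩
  · exact ⟨⟨k+1, by omega⟩, by simp [dig]⟩

lemma dig_norm_le (θ : ℝ) (p : ℕ) (i : Fin (p+1)) : ‖dig θ p i‖ ≤ 1 := by
  unfold dig
  split
  · simp
  · rw [norm_pow, norm_rot, one_pow]

lemma xi_norm (α : ℂ) (δ : ℕ → ℂ) (j : ℕ) : ‖xi α δ j‖ = ‖α‖ := by
  induction j with
  | zero => rfl
  | succ j ih => rw [xi]; split <;> simp [RCLike.norm_conj, ih]

lemma xi_congr (α : ℂ) {δ δ' : ℕ → ℂ} :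
    ∀ {j : ℕ}, (∀ m, m < j → δ m = δ' m) → xi α δ j = xi α δ' j
  | 0, _ => rfl
  | j+1, h => by
    have hj := h j (Nat.lt_succ_self j)
    have ih := xi_congr α (δ := δ) (δ' := δ') (fun m hm => h m (hm.trans (Nat.lt_succ_self j)))
    rw [xi, xi, hj, ih]

lemma Ncount_congr {δ δ' : ℕ → ℂ} {j : ℕ} (h : ∀ m, m ≤ j → δ m = δ' m) :
    Ncount δ j = Ncount δ' j := by
  unfold Ncount
  congr 1
  apply Finset.filter_congr
  intro m hm
  simp only [Finset.mem_Icc] at hm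
  rw [h m hm.2]

lemma isClosed_depends {p n : ℕ} {P : (ℕ → Fin (p+1)) → Prop}
    (hP : ∀ σ τ : ℕ → Fin (p+1), (∀ m, m ≤ n → σ m = τ m) → P σ → P τ) :
    IsClosed {σ | P σ} := by
  have hres : Continuous (fun σ : ℕ → Fin (p+1) => fun i : Fin (n+1) => σ i.val) :=
    continuous_pi fun i => continuous_apply _
  have heq : {σ | P σ} = (fun σ : ℕ → Fin (p+1) => fun i : Fin (n+1) => σ i.val) ⁻¹'
      ((fun σ : ℕ → Fin (p+1) => fun i : Fin (n+1) => σ i.val) '' {σ | P σ}) := by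
    apply Set.Subset.antisymm (Set.subset_preimage_image _ _)
    rintro σ ⟨τ, hτ, hre⟩
    exact hP τ σ (fun m hm => congrFun hre ⟨m, Nat.lt_succ_of_le hm⟩) hτ
  rw [heq]
  exact (isClosed_discrete _).preimage hres

lemma continuous_depends {p n : ℕ} {f : (ℕ → Fin (p+1)) → ℂ}
    (hf : ∀ σ τ : ℕ → Fin (p+1), (∀ m, m ≤ n → σ m = τ m) → f σ = f τ) : Continuous f := by
  have hfe : f = (fun v : Fin (n+1) → Fin (p+1) =>
      f (fun m => if h : m < n+1 then v ⟨m, h⟩ else 0)) ∘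
      (fun σ => fun i : Fin (n+1) => σ i.val) := by
    funext σ
    exact hf σ _ (fun m hm => by simp [Nat.lt_succ_of_le hm])
  rw [hfe]
  exact continuous_of_discreteTopology.comp (continuous_pi fun i => continuous_apply _)

lemma firstNonzero_one_iff (δ : ℕ → ℂ) :
    FirstNonzero δ 1 ↔ ∀ j, (∀ m, m < j → δ m = 0) → (δ j = 0 ∨ δ j = 1) := by
  classical
  constructor
  · rintro (hall | ⟨j, hj1, hjz⟩) j' h'
    · exact Or.inl (hall j')
    · rcases lt_trichotomy j' j with h | rfl | h
      · exact Or.inl (hjz j' h)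
      · exact Or.inr hj1
      · exact absurd (hj1 ▸ h' j h) one_ne_zero
  · intro h
    by_cases hall : ∀ n, δ n = 0
    · exact Or.inl hall
    · push_neg at hall
      right
      refine ⟨Nat.find hall, ?_, fun m hm => not_not.mp (Nat.find_min hall hm)⟩
      rcases h (Nat.find hall) (fun m hm => not_not.mp (Nat.find_min hall hm)) with h0 | h1
      · exact absurd h0 (Nat.find_spec hall)
      · exact h1

/-- X³₁ is a closed subset of ℂ. -/
theorem X3one_isClosed (α : ℂ) (θ : ℝ) (p : ℕ) (q : ℤ) (hp : 0 < p)
    (hθ : θ = 2 * Real.pi * (q : ℝ) / (p : ℝ)) (hα : ‖α‖ < 1) :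
    IsClosed (X3one α θ p) := by
  classical
  set f : ℕ → (ℕ → Fin (p+1)) → ℂ := fun n σ =>
    dig θ p (σ n) * ∏ j ∈ Finset.Icc 1 n, xi α (fun m => dig θ p (σ m)) j with hfdef
  set S : Set (ℕ → Fin (p+1)) :=
    {σ | Walt θ p (fun m => dig θ p (σ m)) ∧ FirstNonzero (fun m => dig θ p (σ m)) 1}
    with hSdef
  -- continuity of each term
  have hcont : ∀ n, Continuous (f n) := by
    intro n
    apply continuous_depends (n := n)
    intro σ τ h
    simp only [hfdef]
    rw [h n le_rfl]
    congr 1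
    apply Finset.prod_congr rfl
    intro j hj
    simp only [Finset.mem_Icc] at hj
    exact xi_congr α (fun m hm => by rw [h m (le_of_lt (lt_of_lt_of_le hm hj.2))])
  -- bound
  have hbound : ∀ n σ, ‖f n σ‖ ≤ ‖α‖ ^ n := by
    intro n σ
    simp only [hfdef]
    rw [norm_mul]
    have h1 : ‖∏ j ∈ Finset.Icc 1 n, xi α (fun m => dig θ p (σ m)) j‖ = ‖α‖ ^ n := by
      rw [norm_prod]
      rw [Finset.prod_congr rfl (fun j _ => xi_norm α _ j)]
      rw [Finset.prod_const, Nat.card_Icc, Nat.add_sub_cancel]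
    rw [h1]
    calc ‖dig θ p (σ n)‖ * ‖α‖ ^ n ≤ 1 * ‖α‖ ^ n := by
          apply mul_le_mul_of_nonneg_right (dig_norm_le θ p (σ n)) (by positivity)
      _ = ‖α‖ ^ n := one_mul _
  have hG : Continuous (fun σ => ∑' n, f n σ) :=
    continuous_tsum hcont (summable_geometric_of_lt_one (norm_nonneg α) hα) hbound
  -- closedness of S
  have hS : IsClosed S := by
    have hrw : S = {σ : ℕ → Fin (p+1) | dig θ p (σ 0) = 0} ∩
        ((⋂ j : ℕ, {σ : ℕ → Fin (p+1) | (∀ m, m < j → dig θ p (σ m) = 0) →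
            (dig θ p (σ j) = 0 ∨ dig θ p (σ j) = 1)}) ∩
         ⋂ j : ℕ, ⋂ k : ℕ, {σ : ℕ → Fin (p+1) | j < k → dig θ p (σ j) ≠ 0 →
            dig θ p (σ k) ≠ 0 → (∀ m, j < m → m < k → dig θ p (σ m) = 0) →
            dig θ p (σ k) = (if Odd (Ncount (fun m => dig θ p (σ m)) j) then rot θ
              else (rot θ)⁻¹) * dig θ p (σ j)}) := by
      ext σ
      simp only [hSdef, Set.mem_setOf_eq, Set.mem_inter_iff, Set.mem_iInter, Walt, AC,
        firstNonzero_one_iff]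
      constructor
      · rintro ⟨⟨h0, _, hac⟩, hfn⟩
        exact ⟨h0, hfn, fun j k hjk => hac j k hjk⟩
      · rintro ⟨h0, hfn, hac⟩
        exact ⟨⟨h0, fun n => dig_mem θ p (σ n), fun j k hjk => hac j k hjk⟩, hfn⟩
    rw [hrw]
    refine IsClosed.inter ?_ (IsClosed.inter ?_ ?_)
    · exact isClosed_depends (n := 0) (fun σ τ h h0 => by rw [← h 0 le_rfl]; exact h0)
    · apply isClosed_iInter
      intro j
      apply isClosed_depends (n := j)
      intro σ τ h hP hz
      have hz' : ∀ m, m < j → dig θ p (σ m) = 0 := fun m hm => by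
        rw [h m (le_of_lt hm)]; exact hz m hm
      rcases hP hz' with h1 | h1
      · exact Or.inl (by rw [← h j le_rfl]; exact h1)
      · exact Or.inr (by rw [← h j le_rfl]; exact h1)
    · apply isClosed_iInter
      intro j
      apply isClosed_iInter
      intro k
      apply isClosed_depends (n := k)
      intro σ τ h hP hjk hj hk hz
      have hagree : ∀ m, m ≤ k → dig θ p (σ m) = dig θ p (τ m) := fun m hm => by rw [h m hm]
      have hj' : dig θ p (σ j) ≠ 0 := by rw [hagree j (le_of_lt hjk)]; exact hj
      have hk' : dig θ p (σ k) ≠ 0 := by rw [hagree k le_rfl]; exact hk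
      have hz' : ∀ m, j < m → m < k → dig θ p (σ m) = 0 := fun m h1 h2 => by
        rw [hagree m (le_of_lt h2)]; exact hz m h1 h2
      have := hP hjk hj' hk' hz'
      rw [hagree k le_rfl, hagree j (le_of_lt hjk),
        Ncount_congr (fun m hm => hagree m (le_trans hm (le_of_lt hjk)))] at this
      exact this
  -- image equality
  have himg : X3one α θ p = (fun σ => ∑' n, f n σ) '' S := by
    ext x
    constructor
    · rintro ⟨δ, hW, hFN, hx⟩
      have hsur : ∀ n, ∃ i : Fin (p+1), dig θ p i = δ n := fun n => dig_surj θ p (hW.2.1 n)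
      choose σ hσ using hsur
      have hfun : (fun m => dig θ p (σ m)) = δ := funext hσ
      refine ⟨σ, ⟨by rw [hfun]; exact hW, by rw [hfun]; exact hFN⟩, ?_⟩
      rw [hx]
      exact tsum_congr fun n => by simp only [hfdef]; rw [hσ n, hfun]
    · rintro ⟨σ, ⟨hW, hFN⟩, rfl⟩
      exact ⟨fun m => dig θ p (σ m), hW, hFN, rfl⟩
  rw [himg]
  exact (hS.isCompact.image hG).isClosed
end
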